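/- Let q ∈ ℂ be nonzero and not a root of unity and let n ≥ 1 be an integer. (a) If λ, c ∈ ℂ with λ ≠ 0 satisfy q²λ − q⁴λ² + c = 0 and q^{2(1−n)}λ − q^{4(1−n)}λ² + c = 0, then λ = q^{n−2}/(qⁿ + q⁻ⁿ) and c = −1/(qⁿ + q⁻ⁿ)². (b) There is no λ ∈ ℂ satisfying both 1 − q⁴λ² = 0 and 1 − q^{4(1−n)}λ² = 0. -/

import Mathlib

/-- (a) If `λ ≠ 0` satisfies `q²λ − q⁴λ² + c = 0` and `q^(2(1−n))λ − q^(4(1−n))λ² + c = 0`,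
then `λ = q^(n−2)/(qⁿ+q⁻ⁿ)` and `c = −1/(qⁿ+q⁻ⁿ)²`.
(b) No `λ` satisfies both `1 − q⁴λ² = 0` and `1 − q^(4(1−n))λ² = 0`. -/
theorem stmt10 (q : ℂ) (hq : q ≠ 0) (hq' : ∀ k : ℕ, 0 < k → q ^ k ≠ 1)
    (n : ℕ) (hn : 1 ≤ n) :
    (∀ lam c : ℂ, lam ≠ 0 →
      q ^ 2 * lam - q ^ 4 * lam ^ 2 + c = 0 →
      q ^ (2 * (1 - (n : ℤ))) * lam - q ^ (4 * (1 - (n : ℤ))) * lam ^ 2 + c = 0 →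
      lam = q ^ ((n : ℤ) - 2) / (q ^ (n : ℤ) + q ^ (-(n : ℤ))) ∧
      c = -1 / (q ^ (n : ℤ) + q ^ (-(n : ℤ))) ^ 2) ∧
    ¬ ∃ lam : ℂ,
      1 - q ^ 4 * lam ^ 2 = 0 ∧ 1 - q ^ (4 * (1 - (n : ℤ))) * lam ^ 2 = 0 := by
  have ha : q ^ n ≠ 0 := pow_ne_zero _ hq
  have h2n : (q ^ n) ^ 2 ≠ 1 := by rw [← pow_mul]; exact hq' (n * 2) (by omega)
  have h4n : (q ^ n) ^ 4 ≠ 1 := by rw [← pow_mul]; exact hq' (n * 4) (by omega)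
  have hm1 : (q ^ n) ^ 2 + 1 ≠ 0 := by
    intro h
    apply h4n
    have h2 : (q ^ n) ^ 2 = -1 := by linear_combination h
    calc (q ^ n) ^ 4 = ((q ^ n) ^ 2) ^ 2 := by ring
    _ = 1 := by rw [h2]; ring
  have hd : q ^ n + (q ^ n)⁻¹ ≠ 0 := by
    intro h
    apply hm1
    field_simp at h
    linear_combination h
  have e1 : q ^ (2 * (1 - (n : ℤ))) = q ^ 2 / (q ^ n) ^ 2 := by
    rw [show (2 * (1 - (n : ℤ))) = (2 : ℕ) - ((2 * n : ℕ) : ℤ) by push_cast; ring,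
      zpow_sub₀ hq, zpow_natCast, zpow_natCast]
    congr 1
    ring
  have e2 : q ^ (4 * (1 - (n : ℤ))) = q ^ 4 / (q ^ n) ^ 4 := by
    rw [show (4 * (1 - (n : ℤ))) = (4 : ℕ) - ((4 * n : ℕ) : ℤ) by push_cast; ring,
      zpow_sub₀ hq, zpow_natCast, zpow_natCast]
    congr 1
    ring
  have e3 : q ^ ((n : ℤ) - 2) = q ^ n / q ^ 2 := by
    rw [show ((n : ℤ) - 2) = ((n : ℕ) : ℤ) - ((2 : ℕ) : ℤ) by push_cast; ring,
      zpow_sub₀ hq, zpow_natCast, zpow_natCast]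
  have e4 : q ^ (-(n : ℤ)) = (q ^ n)⁻¹ := by rw [zpow_neg, zpow_natCast]
  have en : q ^ ((n : ℤ)) = q ^ n := zpow_natCast q n
  constructor
  · intro lam c hl h1 h2
    rw [e1, e2] at h2
    field_simp at h2
    have key : (q ^ n) ^ 2 * (((q ^ n) ^ 2 - 1) * lam *
        (q ^ 2 * (q ^ n) ^ 2 - q ^ 4 * lam * ((q ^ n) ^ 2 + 1))) = 0 := by
      linear_combination (q ^ n) ^ 6 * h1 - (q ^ n) ^ 2 * h2
    have key2 : q ^ 2 * (q ^ n) ^ 2 - q ^ 4 * lam * ((q ^ n) ^ 2 + 1) = 0 := by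
      rcases mul_eq_zero.mp key with h | h
      · exact absurd h (pow_ne_zero _ ha)
      rcases mul_eq_zero.mp h with h | h
      · rcases mul_eq_zero.mp h with h | h
        · exact absurd (by linear_combination h) h2n
        · exact absurd h hl
      · exact h
    have hlam : lam * (q ^ 2 * ((q ^ n) ^ 2 + 1)) = q ^ n * q ^ n := by
      apply mul_left_cancel₀ (pow_ne_zero 2 hq)
      linear_combination -key2
    have hx : (q ^ n) * (q ^ n + (q ^ n)⁻¹) = (q ^ n) ^ 2 + 1 := by
      rw [mul_add, mul_inv_cancel₀ ha]; ring
    refine ⟨?_, ?_⟩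
    · rw [e3, e4, en, div_div, eq_div_iff (mul_ne_zero (pow_ne_zero 2 hq) hd)]
      apply mul_left_cancel₀ ha
      calc (q ^ n) * (lam * (q ^ 2 * (q ^ n + (q ^ n)⁻¹)))
          = lam * q ^ 2 * ((q ^ n) * (q ^ n + (q ^ n)⁻¹)) := by ring
        _ = lam * q ^ 2 * ((q ^ n) ^ 2 + 1) := by rw [hx]
        _ = q ^ n * q ^ n := by linear_combination hlam
    · rw [en, e4, eq_div_iff (pow_ne_zero 2 hd)]
      apply mul_left_cancel₀ (pow_ne_zero 2 ha)
      calc (q ^ n) ^ 2 * (c * (q ^ n + (q ^ n)⁻¹) ^ 2)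
          = c * ((q ^ n) * (q ^ n + (q ^ n)⁻¹)) ^ 2 := by ring
        _ = c * ((q ^ n) ^ 2 + 1) ^ 2 := by rw [hx]
        _ = (q ^ n) ^ 2 * (-1) := by
            linear_combination (((q ^ n) ^ 2 + 1) ^ 2) * h1 +
              (q ^ 2 * lam * ((q ^ n) ^ 2 + 1) - 1) * hlam
  · rintro ⟨lam, hb1, hb2⟩
    rw [e2] at hb2
    field_simp at hb2
    exact h4n (by linear_combination hb2 - hb1)
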